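/- Let V be a B-saturated variety of Heyting algebras, A a formula, π a finite set of propositional variables strictly containing all variables of A, and p ∈ π a variable not occurring in A. Let A^p be the result of replacing every occurrence of ⊥ in A by p, let π^∧ be the conjunction of all variables in π, and let W(A,π,p) := (p → π^∧) → A^p. Then the following are equivalent: (a) A is valid in V; (b) W(A,π,p) is valid in V; (c) A^π (the result of replacing ⊥ by π^∧ in A) is valid in V. -/

import Mathlib

/-- Propositional formulas over ∧, ∨, →, ⊥ and variables. -/
inductive Fml : Type
  | var : ℕ → Fml
  | bot : Fml
  | and : Fml → Fml → Fml
  | or  : Fml → Fml → Fml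
  | imp : Fml → Fml → Fml

namespace Fml

/-- A formula is positive if it contains no ⊥. -/
def Positive : Fml → Prop
  | var _ => True
  | bot => False
  | and A B => A.Positive ∧ B.Positive
  | or A B => A.Positive ∧ B.Positive
  | imp A B => A.Positive ∧ B.Positive

/-- Evaluation in a Brouwerian (generalized Heyting) algebra, with a designated
value `z` interpreting ⊥. -/
def evalB {α : Type} [GeneralizedHeytingAlgebra α] (z : α) (ν : ℕ → α) : Fml → α
  | var n => ν n
  | bot => z
  | and A B => A.evalB z ν ⊓ B.evalB z ν
  | or A B => A.evalB z ν ⊔ B.evalB z ν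
  | imp A B => A.evalB z ν ⇨ B.evalB z ν

/-- Evaluation in a Heyting algebra (⊥ interpreted as the least element). -/
def eval {α : Type} [HeytingAlgebra α] (ν : ℕ → α) (A : Fml) : α := A.evalB ⊥ ν

/-- Evaluation of (positive) formulas in a Brouwerian algebra
(⊥ gets the junk value ⊤; it is irrelevant for positive formulas). -/
def pEval {α : Type} [GeneralizedHeytingAlgebra α] (ν : ℕ → α) (A : Fml) : α := A.evalB ⊤ ν

/-- Substitution. -/
def subst (σ : ℕ → Fml) : Fml → Fml
  | var n => σ n
  | bot => bot
  | and A B => and (A.subst σ) (B.subst σ)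
  | or A B => or (A.subst σ) (B.subst σ)
  | imp A B => imp (A.subst σ) (B.subst σ)

/-- Replacing every occurrence of ⊥ by the formula `C`. -/
def substBot : Fml → Fml → Fml
  | var n, _ => var n
  | bot, C => C
  | and A B, C => and (A.substBot C) (B.substBot C)
  | or A B, C => or (A.substBot C) (B.substBot C)
  | imp A B, C => imp (A.substBot C) (B.substBot C)

/-- The set of variables occurring in a formula. -/
def vars : Fml → Finset ℕ
  | var n => {n}
  | bot => ∅
  | and A B => A.vars ∪ B.vars
  | or A B => A.vars ∪ B.vars
  | imp A B => A.vars ∪ B.vars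

end Fml

/-- The set of positive formulas. -/
def PosFml : Set Fml := {A | A.Positive}

/-- A substitution is positive if all its values are positive formulas. -/
def PosSubst (σ : ℕ → Fml) : Prop := ∀ n, (σ n).Positive

/-- Validity of a formula in a Heyting algebra. -/
def ValidH (α : Type) [HeytingAlgebra α] (A : Fml) : Prop := ∀ ν : ℕ → α, A.eval ν = ⊤

/-- Intuitionistic propositional logic (via algebraic semantics). -/
def IntL : Set Fml := {A | ∀ (α : Type) [HeytingAlgebra α], ValidH α A}

/-- Superintuitionistic logics. -/
structure IsSILogic (L : Set Fml) : Prop where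
  int_sub : IntL ⊆ L
  mp : ∀ A B : Fml, Fml.imp A B ∈ L → A ∈ L → B ∈ L
  subst_closed : ∀ A ∈ L, ∀ σ : ℕ → Fml, A.subst σ ∈ L

/-- The least superintuitionistic logic containing `Γ`. -/
def IntPlus (Γ : Set Fml) : Set Fml := ⋂₀ {L | IsSILogic L ∧ Γ ⊆ L}

/-- The positive fragment of intuitionistic logic. -/
def IntLPos : Set Fml := IntL ∩ PosFml

/-- Positive logics. -/
structure IsPosLogic (P : Set Fml) : Prop where
  pos : P ⊆ PosFml
  int_sub : IntLPos ⊆ P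
  mp : ∀ A B : Fml, Fml.imp A B ∈ P → A ∈ P → B ∈ P
  subst_closed : ∀ A ∈ P, ∀ σ : ℕ → Fml, PosSubst σ → A.subst σ ∈ P

/-- The least positive logic containing `Γ`. -/
def IntPosPlus (Γ : Set Fml) : Set Fml := ⋂₀ {P | IsPosLogic P ∧ Γ ⊆ P}

/-- Homomorphism of Brouwerian algebras (preserves ⊓, ⊔, ⇨, ⊤). -/
def IsBrHom {α β : Type} [GeneralizedHeytingAlgebra α] [GeneralizedHeytingAlgebra β]
    (f : α → β) : Prop :=
  (∀ a b : α, f (a ⊓ b) = f a ⊓ f b) ∧ (∀ a b : α, f (a ⊔ b) = f a ⊔ f b) ∧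
  (∀ a b : α, f (a ⇨ b) = f a ⇨ f b) ∧ f ⊤ = ⊤

/-- A Heyting algebra is a model of a set of formulas `T`. -/
def Models (α : Type) [HeytingAlgebra α] (T : Set Fml) : Prop := ∀ A ∈ T, ValidH α A

/-- The variety (of Heyting algebras) axiomatized by `T` is B-saturated: any Heyting
algebra whose Brouwerian reduct embeds into the reduct of a model of `T` is itself
a model of `T`. -/
def BSaturated (T : Set Fml) : Prop :=
  ∀ (α : Type) (iα : HeytingAlgebra α),
    (∃ (β : Type) (iβ : HeytingAlgebra β), @Models β iβ T ∧
      ∃ f : α → β, Function.Injective f ∧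
        @IsBrHom α β iα.toGeneralizedHeytingAlgebra iβ.toGeneralizedHeytingAlgebra f) →
    @Models α iα T

/-- A subset of a Brouwerian algebra closed under the Brouwerian operations. -/
def BrClosed {α : Type} [GeneralizedHeytingAlgebra α] (S : Set α) : Prop :=
  ⊤ ∈ S ∧ ∀ a ∈ S, ∀ b ∈ S, a ⊓ b ∈ S ∧ a ⊔ b ∈ S ∧ (a ⇨ b) ∈ S

/-- The Brouwerian subalgebra generated by a set. -/
def genBr {α : Type} [GeneralizedHeytingAlgebra α] (s : Set α) : Set α :=
  ⋂₀ {S | BrClosed S ∧ s ⊆ S}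

/-- Conjunction of a list of variables (nonempty case is the intended one). -/
def conjList : List ℕ → Fml
  | [] => Fml.imp (Fml.var 0) (Fml.var 0)
  | [n] => Fml.var n
  | n :: l => Fml.and (Fml.var n) (conjList l)

/-- The conjunction π^∧ of all variables in a finite set π. -/
def conjOf (π : Finset ℕ) : Fml := conjList (π.sort (· ≤ ·))

/-- Multiple-conclusion rules. -/
def MRule : Type := Finset Fml × Finset Fml

/-- A rule is positive if all its premises and conclusions are positive. -/
def PosRule (r : MRule) : Prop := (∀ A ∈ r.1, A.Positive) ∧ (∀ B ∈ r.2, B.Positive)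

/-- Validity of a (positive) m-rule in a Brouwerian algebra. -/
def RuleValid (α : Type) [GeneralizedHeytingAlgebra α] (r : MRule) : Prop :=
  ∀ ν : ℕ → α, (∀ A ∈ r.1, A.pEval ν = ⊤) → ∃ B ∈ r.2, B.pEval ν = ⊤

/-- A Brouwerian algebra is a model of a set of positive formulas. -/
def ModelsP (β : Type) [GeneralizedHeytingAlgebra β] (P : Set Fml) : Prop :=
  ∀ A ∈ P, ∀ ν : ℕ → β, A.pEval ν = ⊤

/-- Filter of a Brouwerian (or Heyting) algebra. -/
def IsFilter' {α : Type} [GeneralizedHeytingAlgebra α] (F : Set α) : Prop :=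
  ⊤ ∈ F ∧ ∀ a b : α, a ∈ F → (a ⇨ b) ∈ F → b ∈ F

/-- Validity of a formula throughout the variety axiomatized by T. -/
def ValidT (T : Set Fml) (A : Fml) : Prop :=
  ∀ (α : Type) [HeytingAlgebra α], Models α T → ValidH α A

section Aux
variable {α : Type} [GeneralizedHeytingAlgebra α]

lemma evalB_congr (z : α) (ν ν' : ℕ → α) :
    ∀ A : Fml, (∀ n ∈ A.vars, ν n = ν' n) → A.evalB z ν = A.evalB z ν'
  | .var n, h => h n (by simp [Fml.vars])
  | .bot, _ => rfl
  | .and A B, h => by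
      simp only [Fml.evalB]
      rw [evalB_congr z ν ν' A (fun n hn => h n (by simp [Fml.vars, hn])),
          evalB_congr z ν ν' B (fun n hn => h n (by simp [Fml.vars, hn]))]
  | .or A B, h => by
      simp only [Fml.evalB]
      rw [evalB_congr z ν ν' A (fun n hn => h n (by simp [Fml.vars, hn])),
          evalB_congr z ν ν' B (fun n hn => h n (by simp [Fml.vars, hn]))]
  | .imp A B, h => by
      simp only [Fml.evalB]
      rw [evalB_congr z ν ν' A (fun n hn => h n (by simp [Fml.vars, hn])),
          evalB_congr z ν ν' B (fun n hn => h n (by simp [Fml.vars, hn]))]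

lemma substBot_evalB (z : α) (ν : ℕ → α) (C : Fml) :
    ∀ A : Fml, (A.substBot C).evalB z ν = A.evalB (C.evalB z ν) ν
  | .var n => rfl
  | .bot => rfl
  | .and A B => by
      simp only [Fml.substBot, Fml.evalB, substBot_evalB z ν C A, substBot_evalB z ν C B]
  | .or A B => by
      simp only [Fml.substBot, Fml.evalB, substBot_evalB z ν C A, substBot_evalB z ν C B]
  | .imp A B => by
      simp only [Fml.substBot, Fml.evalB, substBot_evalB z ν C A, substBot_evalB z ν C B]

lemma conjList_le (z : α) (ν : ℕ → α) :
    ∀ l : List ℕ, ∀ n ∈ l, (conjList l).evalB z ν ≤ ν n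
  | [], n, h => absurd h (List.not_mem_nil (a := n))
  | [m], n, h => by
      simp only [List.mem_singleton] at h; subst h; simp [conjList, Fml.evalB]
  | m :: k :: l, n, h => by
      rcases List.mem_cons.1 h with h | h
      · subst h; exact inf_le_left
      · exact le_trans inf_le_right (conjList_le z ν (k :: l) n h)

lemma le_conjList (z : α) (ν : ℕ → α) (x : α) :
    ∀ l : List ℕ, (∀ n ∈ l, x ≤ ν n) → x ≤ (conjList l).evalB z ν
  | [], _ => by simp [conjList, Fml.evalB, himp_self]
  | [m], h => h m (by simp)
  | m :: k :: l, h =>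
      le_inf (h m (by simp)) (le_conjList z ν x (k :: l)
        (fun n hn => h n (List.mem_cons_of_mem m hn)))

lemma inf_himp_inf (e a b : α) : e ⊓ (a ⇨ b) = e ⊓ ((e ⊓ a) ⇨ (e ⊓ b)) := by
  apply le_antisymm
  · refine le_inf inf_le_left (le_himp_iff.2 ?_)
    refine le_inf (le_trans inf_le_left inf_le_left) ?_
    calc e ⊓ (a ⇨ b) ⊓ (e ⊓ a) ≤ (a ⇨ b) ⊓ a :=
          le_inf (le_trans inf_le_left inf_le_right) (le_trans inf_le_right inf_le_right)
      _ ≤ b := himp_inf_le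
  · refine le_inf inf_le_left (le_himp_iff.2 ?_)
    calc e ⊓ ((e ⊓ a) ⇨ (e ⊓ b)) ⊓ a
        ≤ ((e ⊓ a) ⇨ (e ⊓ b)) ⊓ (e ⊓ a) := by
          refine le_inf (le_trans inf_le_left inf_le_right) (le_inf (le_trans inf_le_left inf_le_left) inf_le_right)
      _ ≤ e ⊓ b := himp_inf_le
      _ ≤ b := inf_le_right

lemma evalB_inf_z (e z z' : α) (h : e ⊓ z = e ⊓ z') (ν : ℕ → α) :
    ∀ A : Fml, e ⊓ A.evalB z ν = e ⊓ A.evalB z' ν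
  | .var n => rfl
  | .bot => h
  | .and A B => by
      simp only [Fml.evalB]
      rw [inf_inf_distrib_left, evalB_inf_z e z z' h ν A, evalB_inf_z e z z' h ν B,
        ← inf_inf_distrib_left]
  | .or A B => by
      simp only [Fml.evalB]
      rw [inf_sup_left, evalB_inf_z e z z' h ν A, evalB_inf_z e z z' h ν B, ← inf_sup_left]
  | .imp A B => by
      simp only [Fml.evalB]
      rw [inf_himp_inf, evalB_inf_z e z z' h ν A, evalB_inf_z e z z' h ν B, ← inf_himp_inf]

end Aux

def upHey {α : Type} [HeytingAlgebra α] (c : α) : HeytingAlgebra {x : α // c ≤ x} :=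
  letI : Max {x : α // c ≤ x} := ⟨fun a b => ⟨a.1 ⊔ b.1, le_trans a.2 le_sup_left⟩⟩
  letI : Min {x : α // c ≤ x} := ⟨fun a b => ⟨a.1 ⊓ b.1, le_inf a.2 b.2⟩⟩
  letI L : Lattice {x : α // c ≤ x} :=
    Function.Injective.lattice Subtype.val Subtype.val_injective Iff.rfl Iff.rfl (fun _ _ => rfl) (fun _ _ => rfl)
  { L with
    top := ⟨⊤, le_top⟩
    le_top := fun a => le_top (α := α)
    bot := ⟨c, le_refl c⟩
    bot_le := fun a => a.2
    himp := fun a b => ⟨a.1 ⇨ b.1, le_trans b.2 le_himp⟩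
    compl := fun a => ⟨a.1 ⇨ c, le_himp⟩
    le_himp_iff := fun a b c' => le_himp_iff (α := α)
    himp_bot := fun a => rfl }

lemma up_evalB {α : Type} [HeytingAlgebra α] (c : α) (z : {x : α // c ≤ x}) (ν' : ℕ → {x : α // c ≤ x}) :
    ∀ A : Fml, (@Fml.evalB _ (upHey c).toGeneralizedHeytingAlgebra z ν' A).1
      = A.evalB z.1 (fun n => (ν' n).1)
  | .var n => rfl
  | .bot => rfl
  | .and A B => by
      simp only [Fml.evalB]
      rw [← up_evalB c z ν' A, ← up_evalB c z ν' B]; rfl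
  | .or A B => by
      simp only [Fml.evalB]
      rw [← up_evalB c z ν' A, ← up_evalB c z ν' B]; rfl
  | .imp A B => by
      simp only [Fml.evalB]
      rw [← up_evalB c z ν' A, ← up_evalB c z ν' B]; rfl

/-- generalized Wajsberg theorem: for a B-saturated variety V,
V ⊨ A iff V ⊨ W(A,π,p) = (p → π^∧) → A^p iff V ⊨ A^π. -/
theorem stmt9 (T : Set Fml) (hT : BSaturated T) (A : Fml) (π : Finset ℕ) (p : ℕ)
    (hsub : A.vars ⊂ π) (hp : p ∈ π) (hpA : p ∉ A.vars) :
    (ValidT T A ↔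
      ValidT T (Fml.imp (Fml.imp (Fml.var p) (conjOf π)) (A.substBot (Fml.var p)))) ∧
    (ValidT T A ↔ ValidT T (A.substBot (conjOf π))) := by

  have hAp : A.vars ⊆ π := hsub.subset
  -- (a) → (b)
  have hab : ValidT T A →
      ValidT T (Fml.imp (Fml.imp (Fml.var p) (conjOf π)) (A.substBot (Fml.var p))) := by
    intro hA α _ hM ν
    set m : α := (conjOf π).evalB ⊥ ν with hm
    set e : α := ν p ⇨ m with he
    set c : α := e ⊓ ν p with hc
    have hcν : ∀ n ∈ π, c ≤ ν n := by
      intro n hn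
      have hcm : c ≤ m := by rw [hc, he, inf_comm]; exact inf_himp_le
      exact hcm.trans (conjList_le ⊥ ν _ n ((Finset.mem_sort _).2 hn))
    letI iU : HeytingAlgebra {x : α // c ≤ x} := upHey c
    have hMU : @Models {x : α // c ≤ x} iU T := by
      refine hT _ _ ⟨α, ‹_›, hM, Subtype.val, Subtype.val_injective, ?_⟩
      exact ⟨fun _ _ => rfl, fun _ _ => rfl, fun _ _ => rfl, rfl⟩
    have hval := hA _ hMU (fun n => if h : n ∈ π then ⟨ν n, hcν n h⟩ else ⊤)
    have h1 : A.evalB c (fun n =>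
        ((if h : n ∈ π then (⟨ν n, hcν n h⟩ : {x : α // c ≤ x}) else ⊤) : {x : α // c ≤ x}).1) = ⊤ := by
      have h := congrArg Subtype.val hval
      rw [Fml.eval, up_evalB] at h
      exact h
    have h2 : A.evalB c ν = ⊤ := by
      rw [evalB_congr c ν _ A ?_]
      · exact h1
      · intro n hn
        simp [hAp hn]
    have h3 : e ⊓ ν p = e ⊓ c := by rw [hc, ← inf_assoc, inf_idem]
    have h4 : e ⊓ A.evalB (ν p) ν = e ⊓ A.evalB c ν := evalB_inf_z e _ _ h3 ν A
    have h5 : e ≤ A.evalB (ν p) ν := inf_eq_left.1 (h4.trans (by rw [h2, inf_top_eq]))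
    show (Fml.imp (Fml.imp (Fml.var p) (conjOf π)) (A.substBot (Fml.var p))).evalB ⊥ ν = ⊤
    simp only [Fml.evalB]
    rw [substBot_evalB]
    simp only [Fml.evalB]
    exact himp_eq_top_iff.2 h5
  -- (b) → (c)
  have hbc : ValidT T (Fml.imp (Fml.imp (Fml.var p) (conjOf π)) (A.substBot (Fml.var p))) →
      ValidT T (A.substBot (conjOf π)) := by
    intro hW α _ hM ν
    set m : α := (conjOf π).evalB ⊥ ν with hm
    set μ : ℕ → α := fun n => if n = p then m else ν n with hμ
    have hμp : μ p = m := by simp [hμ]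
    have hmle : ∀ n ∈ π, m ≤ ν n := fun n hn =>
      conjList_le ⊥ ν _ n ((Finset.mem_sort _).2 hn)
    have hconj : (conjOf π).evalB ⊥ μ = m := by
      apply le_antisymm
      · rw [hm]
        apply le_conjList
        intro n hn
        have h := conjList_le ⊥ μ _ n hn
        rcases eq_or_ne n p with rfl | hne
        · exact h.trans (hμp.le.trans (hmle n hp))
        · simpa [hμ, conjOf, hne] using h
      · apply le_conjList
        intro n hn
        rcases eq_or_ne n p with rfl | hne
        · simp [hμ]
        · simp only [hμ, if_neg hne]
          exact hmle n ((Finset.mem_sort _).1 hn)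
    have h := hW α hM μ
    rw [Fml.eval] at h
    simp only [Fml.evalB] at h
    rw [substBot_evalB, hconj] at h
    simp only [Fml.evalB] at h
    rw [hμp, himp_self, top_himp] at h
    have h2 : A.evalB m ν = ⊤ := by
      rw [evalB_congr m ν μ A ?_]
      · exact h
      · intro n hn
        have hne : n ≠ p := fun hh => hpA (hh ▸ hn)
        simp [hμ, hne]
    rw [Fml.eval, substBot_evalB]
    exact h2
  -- (c) → (a)
  have hca : ValidT T (A.substBot (conjOf π)) → ValidT T A := by
    intro hC α _ hM ν
    set μ : ℕ → α := fun n => if n = p then (⊥ : α) else ν n with hμ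
    have h := hC α hM μ
    rw [Fml.eval, substBot_evalB] at h
    have hz : (conjOf π).evalB ⊥ μ = ⊥ := by
      refine le_bot_iff.1 ?_
      have hh := conjList_le ⊥ μ (π.sort (· ≤ ·)) p ((Finset.mem_sort _).2 hp)
      simpa [hμ, conjOf] using hh
    rw [hz] at h
    rw [Fml.eval, evalB_congr ⊥ ν μ A ?_]
    · exact h
    · intro n hn
      have hne : n ≠ p := fun hh => hpA (hh ▸ hn)
      simp [hμ, hne]
  exact ⟨⟨hab, fun h => hca (hbc h)⟩, ⟨fun h => hbc (hab h), hca⟩⟩
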